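/- Let H be a separable infinite-dimensional complex Hilbert space, X ⊆ H a closed infinite-dimensional subspace with infinite-dimensional orthogonal complement, and let V ⊆ U(H) be the set of unitaries T with T restricted to X⊥ equal to the identity. If K is any unitary with K[X] = X⊥, then every unitary T with T[X] = X lies in V·K·V·K*. -/

import Mathlib

open scoped InnerProductSpace

theorem mem_VKVK_of_invariant
    (H : Type*) [NormedAddCommGroup H] [InnerProductSpace ℂ H] [CompleteSpace H]
    [TopologicalSpace.SeparableSpace H] (hH : ¬ FiniteDimensional ℂ H)
    (X : Submodule ℂ H) (hX : IsClosed (X : Set H))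
    (hXinf : ¬ FiniteDimensional ℂ X) (hXpinf : ¬ FiniteDimensional ℂ Xᗮ)
    (V : Set (unitary (H →L[ℂ] H)))
    (hV : V = {T : unitary (H →L[ℂ] H) | ∀ x ∈ Xᗮ, (T : H →L[ℂ] H) x = x})
    (K : unitary (H →L[ℂ] H))
    (hK : X.map ((K : H →L[ℂ] H) : H →ₗ[ℂ] H) = Xᗮ) :
    ∀ T : unitary (H →L[ℂ] H), X.map ((T : H →L[ℂ] H) : H →ₗ[ℂ] H) = X →
      ∃ A ∈ V, ∃ B ∈ V, T = A * K * B * K⁻¹ := by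
  haveI : CompleteSpace X := hX.completeSpace_coe
  intro T hT
  set Tc : H →L[ℂ] H := (T : H →L[ℂ] H) with hTcdef
  set Kc : H →L[ℂ] H := (K : H →L[ℂ] H) with hKcdef
  set P : H →L[ℂ] H := X.subtypeL ∘L X.orthogonalProjectionOnto with hPdef
  set Q : H →L[ℂ] H := Xᗮ.subtypeL ∘L Xᗮ.orthogonalProjectionOnto with hQdef
  -- projection facts
  have hP_mem : ∀ v : H, P v ∈ X := fun v => (X.orthogonalProjectionOnto v).2
  have hQ_mem : ∀ v : H, Q v ∈ Xᗮ := fun v => (Xᗮ.orthogonalProjectionOnto v).2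
  have hPQ : ∀ v : H, P v + Q v = v := fun v =>
    X.starProjection_add_starProjection_orthogonal v
  have hP_of_mem : ∀ v ∈ X, P v = v := by
    intro v hv
    exact congrArg Subtype.val (Submodule.orthogonalProjectionOnto_mem_subspace_eq_self (⟨v, hv⟩ : X))
  have hQ_of_memp : ∀ v ∈ Xᗮ, Q v = v := by
    intro v hv
    exact congrArg Subtype.val (Submodule.orthogonalProjectionOnto_mem_subspace_eq_self (⟨v, hv⟩ : Xᗮ))
  have hP_of_memp : ∀ v ∈ Xᗮ, P v = 0 := by
    intro v hv
    have := Submodule.orthogonalProjectionOnto_apply_of_mem_orthogonal hv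
    simp [hPdef, this]
  have hQ_of_mem : ∀ v ∈ X, Q v = 0 := by
    intro v hv
    have := Submodule.orthogonalProjectionOnto_orthogonal_apply_eq_zero (K := X) hv
    simp [hQdef, this]
  -- unitary pointwise facts
  have hstar_mul : ∀ (U : unitary (H →L[ℂ] H)) (v : H),
      (star (U : H →L[ℂ] H)) ((U : H →L[ℂ] H) v) = v := by
    intro U v
    have h1 := ContinuousLinearMap.ext_iff.mp (Unitary.coe_star_mul_self U) v
    rwa [ContinuousLinearMap.mul_apply, ContinuousLinearMap.one_apply] at h1
  have hmul_star : ∀ (U : unitary (H →L[ℂ] H)) (v : H),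
      ((U : H →L[ℂ] H)) ((star (U : H →L[ℂ] H)) v) = v := by
    intro U v
    have h1 := ContinuousLinearMap.ext_iff.mp (Unitary.coe_mul_star_self U) v
    rwa [ContinuousLinearMap.mul_apply, ContinuousLinearMap.one_apply] at h1
  have hinner : ∀ (U : unitary (H →L[ℂ] H)) (x y : H),
      ⟪(U : H →L[ℂ] H) x, (U : H →L[ℂ] H) y⟫_ℂ = ⟪x, y⟫_ℂ := by
    intro U x y
    have h2 : (ContinuousLinearMap.adjoint (U : H →L[ℂ] H)) ((U : H →L[ℂ] H) y) = y := by
      rw [← ContinuousLinearMap.star_eq_adjoint]; exact hstar_mul U y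
    calc ⟪(U : H →L[ℂ] H) x, (U : H →L[ℂ] H) y⟫_ℂ
        = ⟪x, (ContinuousLinearMap.adjoint (U : H →L[ℂ] H)) ((U : H →L[ℂ] H) y)⟫_ℂ :=
          (ContinuousLinearMap.adjoint_inner_right _ _ _).symm
      _ = ⟪x, y⟫_ℂ := by rw [h2]
  -- invariance facts
  have hT_X : ∀ v ∈ X, Tc v ∈ X := by
    intro v hv
    rw [← hT]; exact Submodule.mem_map_of_mem hv
  have hTstar_X : ∀ v ∈ X, (star Tc) v ∈ X := by
    intro v hv
    rw [← hT] at hv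
    obtain ⟨y, hy, rfl⟩ := hv
    rw [ContinuousLinearMap.coe_coe, hstar_mul T y]; exact hy
  have hTstar_Xp : ∀ v ∈ Xᗮ, (star Tc) v ∈ Xᗮ := by
    intro v hv
    rw [Submodule.mem_orthogonal]
    intro u hu
    have : ⟪u, (star Tc) v⟫_ℂ = ⟪Tc u, v⟫_ℂ := by
      rw [ContinuousLinearMap.star_eq_adjoint, ContinuousLinearMap.adjoint_inner_right]
    rw [this]
    exact (Submodule.mem_orthogonal _ _).mp hv _ (hT_X u hu)
  have hK_Xp : ∀ v ∈ Xᗮ, Kc v ∈ X := by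
    intro v hv
    rw [← Submodule.orthogonal_orthogonal X, Submodule.mem_orthogonal]
    intro u hu
    rw [← hK] at hu
    obtain ⟨y, hy, rfl⟩ := hu
    rw [ContinuousLinearMap.coe_coe, hinner K y v]
    exact (Submodule.mem_orthogonal _ _).mp hv _ hy
  -- the operator A := T on X, identity on X⊥
  set Ac : H →L[ℂ] H := Tc * P + Q with hAcdef
  have hstarP : star P = P := isSelfAdjoint_starProjection X
  have hstarQ : star Q = Q := isSelfAdjoint_starProjection Xᗮ
  have hstarAc : star Ac = P * star Tc + Q := by
    rw [hAcdef, star_add, star_mul, hstarP, hstarQ]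
  have hAc_apply : ∀ v : H, Ac v = Tc (P v) + Q v := by
    intro v; simp [hAcdef, ContinuousLinearMap.mul_apply]
  have hstarAc_apply : ∀ v : H, (star Ac) v = P ((star Tc) v) + Q v := by
    intro v; rw [hstarAc]; simp [ContinuousLinearMap.mul_apply]
  have hstarAc_of_mem : ∀ v ∈ X, (star Ac) v = (star Tc) v := by
    intro v hv
    rw [hstarAc_apply, hP_of_mem _ (hTstar_X v hv), hQ_of_mem v hv, add_zero]
  have hA_mem : Ac ∈ unitary (H →L[ℂ] H) := by
    rw [Unitary.mem_iff]
    constructor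
    · ext v
      rw [ContinuousLinearMap.mul_apply, ContinuousLinearMap.one_apply, hAc_apply,
        hstarAc_apply, map_add, map_add, hstar_mul T (P v),
        hP_of_memp _ (hTstar_Xp _ (hQ_mem v)), add_zero,
        hP_of_mem _ (hP_mem v), map_add, hQ_of_mem _ (hT_X _ (hP_mem v)),
        hQ_of_memp _ (hQ_mem v), zero_add, hPQ]
    · ext v
      rw [ContinuousLinearMap.mul_apply, ContinuousLinearMap.one_apply, hstarAc_apply, hAc_apply,
        map_add, hP_of_mem _ (hP_mem ((star Tc) v)), hP_of_memp _ (hQ_mem v), add_zero,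
        map_add, hQ_of_mem _ (hP_mem ((star Tc) v)), hQ_of_memp _ (hQ_mem v), zero_add]
      -- goal : Tc (P ((star Tc) v)) + Q v = v
      conv_rhs => rw [← hPQ v]
      congr 1
      have hv : v = P v + Q v := (hPQ v).symm
      have : P ((star Tc) v) = (star Tc) (P v) := by
        conv_lhs => rw [hv]
        rw [map_add, map_add, hP_of_mem _ (hTstar_X _ (hP_mem v)),
          hP_of_memp _ (hTstar_Xp _ (hQ_mem v)), add_zero]
      rw [this, hmul_star T (P v)]
  set A : unitary (H →L[ℂ] H) := ⟨Ac, hA_mem⟩ with hAdef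
  have hAcoe : (A : H →L[ℂ] H) = Ac := rfl
  have hAinv : ((A⁻¹ : unitary (H →L[ℂ] H)) : H →L[ℂ] H) = star Ac := rfl
  have hKinv : ((K⁻¹ : unitary (H →L[ℂ] H)) : H →L[ℂ] H) = star Kc := rfl
  refine ⟨A, ?_, K⁻¹ * (A⁻¹ * T) * K, ?_, by group⟩
  · rw [hV]
    intro x hx
    rw [hAcoe, hAc_apply, hP_of_memp x hx, map_zero, hQ_of_memp x hx, zero_add]
  · rw [hV]
    intro x hx
    have : ((K⁻¹ * (A⁻¹ * T) * K : unitary (H →L[ℂ] H)) : H →L[ℂ] H) x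
        = (star Kc) ((star Ac) (Tc (Kc x))) := by
      simp [ContinuousLinearMap.mul_apply, hAinv, hKinv, hTcdef, hKcdef]
    rw [this, hstarAc_of_mem _ (hT_X _ (hK_Xp x hx)), hstar_mul T (Kc x), hstar_mul K x]
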